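/- Under the hypotheses of the perturbation setting (convex F and Q_j, strictly feasible point with slack σ, strong duality for the γ-perturbed problem, F being L-Lipschitz on a set of diameter D_x, and 0 < γ < σ/2), the optimality gap between the γ-perturbed solution and the original optimum satisfies F(x^γ) − F(x⋆) ≤ 2·L·D_x·γ/σ. -/
import Mathlib


/-- Perturbation bound (Lemma 2 of the paper): under convexity, a Slater point with
slack `σ`, strong duality for the `γ`-perturbed problem, `L`-Lipschitz continuity of
`F` on a set of diameter `D_x`, and `0 < γ < σ/2`, the optimality gap satisfies
`F(x^γ) − F(x⋆) ≤ 2·L·D_x·γ/σ`. -/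
theorem perturbed_optimality_gap {n J : ℕ}
    (F : EuclideanSpace ℝ (Fin n) → ℝ) (Q : Fin J → EuclideanSpace ℝ (Fin n) → ℝ)
    (X : Set (EuclideanSpace ℝ (Fin n))) (Dx L σ γ : ℝ)
    (xstar xγ : EuclideanSpace ℝ (Fin n)) (lam : Fin J → ℝ) (xt : EuclideanSpace ℝ (Fin n))
    (hXconv : Convex ℝ X) (hXcomp : IsCompact X)
    (hFconv : ConvexOn ℝ X F) (hQconv : ∀ j, ConvexOn ℝ X (Q j))
    (hDx : ∀ x ∈ X, ∀ x' ∈ X, ‖x - x'‖ ≤ Dx)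
    (hL : 0 ≤ L) (hLip : ∀ x ∈ X, ∀ x' ∈ X, |F x - F x'| ≤ L * ‖x - x'‖)
    (hxt : xt ∈ X) (hσ : 0 < σ) (hSlater : ∀ j, Q j xt + σ ≤ 0)
    (hγ : 0 < γ) (hγσ : γ < σ / 2)
    (hxstar : xstar ∈ X) (hxstarfeas : ∀ j, Q j xstar ≤ 0)
    (hxstaropt : ∀ x ∈ X, (∀ j, Q j x ≤ 0) → F xstar ≤ F x)
    (hxγ : xγ ∈ X) (hxγfeas : ∀ j, Q j xγ + γ ≤ 0)
    (hxγopt : ∀ x ∈ X, (∀ j, Q j x + γ ≤ 0) → F xγ ≤ F x)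
    (hlam : ∀ j, 0 ≤ lam j)
    (hStrong : IsLeast
      {v : ℝ | ∃ x ∈ X, v = F x + ∑ j, lam j * (Q j x + γ)} (F xγ)) :
    F xγ - F xstar ≤ 2 * L * Dx * γ / σ := by
  set θ : ℝ := γ / σ with hθdef
  have hθpos : 0 < θ := div_pos hγ hσ
  have hθlt : θ < 1 := by
    rw [div_lt_one hσ]; linarith
  have ha : (0:ℝ) ≤ 1 - θ := by linarith
  have hb : (0:ℝ) ≤ θ := le_of_lt hθpos
  have hab : (1 - θ) + θ = 1 := by ring
  have hxθX : (1 - θ) • xstar + θ • xt ∈ X := hXconv hxstar hxt ha hb hab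
  have hθσ : θ * σ = γ := div_mul_cancel₀ γ (ne_of_gt hσ)
  have hfeas : ∀ j, Q j ((1 - θ) • xstar + θ • xt) + γ ≤ 0 := by
    intro j
    have hc := (hQconv j).2 hxstar hxt ha hb hab
    have h1 : (1 - θ) * Q j xstar ≤ 0 :=
      mul_nonpos_of_nonneg_of_nonpos ha (hxstarfeas j)
    have h2 : θ * Q j xt ≤ θ * (-σ) :=
      mul_le_mul_of_nonneg_left (by linarith [hSlater j]) hb
    have : θ * (-σ) = -γ := by rw [mul_neg, hθσ]
    simp only [smul_eq_mul] at hc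
    linarith
  have hF1 : F xγ ≤ F ((1 - θ) • xstar + θ • xt) := hxγopt _ hxθX hfeas
  have hF2 : F ((1 - θ) • xstar + θ • xt) ≤ (1 - θ) * F xstar + θ * F xt := by
    have := hFconv.2 hxstar hxt ha hb hab
    simpa using this
  have hDx0 : 0 ≤ Dx := by
    have := hDx xt hxt xt hxt
    simpa using this
  have hLip' : F xt - F xstar ≤ L * Dx := by
    have h1 := hLip xt hxt xstar hxstar
    have h2 : L * ‖xt - xstar‖ ≤ L * Dx :=
      mul_le_mul_of_nonneg_left (hDx xt hxt xstar hxstar) hL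
    have := abs_le.mp h1
    linarith [this.2]
  have key : F xγ - F xstar ≤ θ * (L * Dx) := by
    have h3 : θ * (F xt - F xstar) ≤ θ * (L * Dx) :=
      mul_le_mul_of_nonneg_left hLip' hb
    nlinarith
  have hbound : θ * (L * Dx) ≤ 2 * L * Dx * γ / σ := by
    rw [hθdef]
    rw [div_mul_eq_mul_div, div_le_div_iff₀ hσ hσ]
    nlinarith [mul_nonneg hL hDx0, mul_nonneg (mul_nonneg hL hDx0) (le_of_lt hγ)]
  linarith
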